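/- If A ⊆ ℝ² is a set whose distance set satisfies Δ(A) ⊆ {4n + 3 : n ∈ ℕ}, then A has at most 3 elements. -/

import Mathlib

lemma sq_mod_eight : ∀ x : ZMod 8, (4 * x + 3) ^ 2 = 1 := by decide

lemma key4 (a : Fin 4 → EuclideanSpace ℝ (Fin 2)) (hinj : Function.Injective a)
    (h : ∀ i j : Fin 4, i ≠ j → ∃ n : ℕ, dist (a i) (a j) = 4 * (n : ℝ) + 3) :
    False := by
  classical
  -- choose the integers
  have hm : ∀ i j : Fin 4, ∃ n : ℕ, i ≠ j → dist (a i) (a j) = 4 * (n : ℝ) + 3 := by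
    intro i j
    by_cases hij : i = j
    · exact ⟨0, fun h' => absurd hij h'⟩
    · obtain ⟨n, hn⟩ := h i j hij
      exact ⟨n, fun _ => hn⟩
  choose m hm using hm
  set v : Fin 3 → EuclideanSpace ℝ (Fin 2) := fun i => a i.succ - a 0 with hv
  set G : Matrix (Fin 3) (Fin 3) ℝ := Matrix.of fun i j => (inner ℝ (v i) (v j) : ℝ) with hG
  -- Gram determinant is zero
  have hdep : ¬ LinearIndependent ℝ v := by
    intro hli
    have := hli.fintype_card_le_finrank
    simp [Fintype.card_fin] at this
  have hGdet : G.det = 0 := by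
    rw [← Matrix.exists_mulVec_eq_zero_iff]
    rw [Fintype.not_linearIndependent_iff] at hdep
    obtain ⟨g, hg, i, hi⟩ := hdep
    refine ⟨g, ?_, ?_⟩
    · intro h0; apply hi; rw [h0]; rfl
    · funext i
      simp only [Matrix.mulVec, dotProduct, hG, Matrix.of_apply]
      have : ∑ j, (inner ℝ (v i) (v j) : ℝ) * g j = inner ℝ (v i) (∑ j, g j • v j) := by
        rw [inner_sum]
        congr 1; funext j
        rw [real_inner_smul_right]; ring
      rw [this, hg, inner_zero_right]; rfl
  -- integer matrix
  set N : Matrix (Fin 3) (Fin 3) ℤ := Matrix.of fun i j =>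
    (4 * (m i.succ 0 : ℤ) + 3) ^ 2 + (4 * (m j.succ 0 : ℤ) + 3) ^ 2 -
      (if i = j then 0 else (4 * (m i.succ j.succ : ℤ) + 3) ^ 2) with hN
  have hcast : ∀ i j, ((N i j : ℤ) : ℝ) = 2 * G i j := by
    intro i j
    have hvi : ‖v i‖ = 4 * (m i.succ 0 : ℝ) + 3 := by
      rw [hv]
      have := hm i.succ 0 (Fin.succ_ne_zero i)
      rwa [dist_eq_norm] at this
    have hvj : ‖v j‖ = 4 * (m j.succ 0 : ℝ) + 3 := by
      rw [hv]
      have := hm j.succ 0 (Fin.succ_ne_zero j)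
      rwa [dist_eq_norm] at this
    have hsub : v i - v j = a i.succ - a j.succ := by simp only [hv, sub_sub_sub_cancel_right]
    have hpol : 2 * G i j = ‖v i‖ ^ 2 + ‖v j‖ ^ 2 - ‖v i - v j‖ ^ 2 := by
      have := @norm_sub_sq_real (EuclideanSpace ℝ (Fin 2)) _ _ (v i) (v j)
      simp only [hG, Matrix.of_apply]
      linarith [this]
    by_cases hij : i = j
    · subst hij
      simp only [hN, Matrix.of_apply, if_pos rfl]
      rw [hpol, hvi, sub_self, norm_zero]
      push_cast; ring
    · have hE : ‖v i - v j‖ = 4 * (m i.succ j.succ : ℝ) + 3 := by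
        rw [hsub]
        have := hm i.succ j.succ (fun e => hij (Fin.succ_injective _ e))
        rwa [dist_eq_norm] at this
      simp only [hN, Matrix.of_apply, if_neg hij]
      rw [hpol, hvi, hvj, hE]
      push_cast; ring
  have hNdet : N.det = 0 := by
    have : ((N.det : ℤ) : ℝ) = ((2 : ℝ) • G).det := by
      rw [Matrix.det_fin_three N, Matrix.det_fin_three ((2 : ℝ) • G)]
      push_cast
      simp only [Matrix.smul_apply, smul_eq_mul]
      rw [hcast, hcast, hcast, hcast, hcast, hcast, hcast, hcast, hcast]
    rw [Matrix.det_smul, hGdet, mul_zero] at this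
    exact_mod_cast this
  -- reduce mod 8
  have h8 : ((N.det : ℤ) : ZMod 8) = 0 := by rw [hNdet]; rfl
  rw [Matrix.det_fin_three] at h8
  push_cast at h8
  have e : ∀ i j : Fin 3, ((N i j : ℤ) : ZMod 8) = if i = j then 2 else 1 := by
    intro i j
    by_cases hij : i = j
    · simp only [hN, Matrix.of_apply, if_pos hij, hij]
      push_cast
      simp only [sq_mod_eight]
      norm_num
    · simp only [hN, Matrix.of_apply, if_neg hij]
      push_cast
      simp only [sq_mod_eight]
      norm_num
  simp only [e] at h8
  revert h8
  decide

/-- If all pairwise distances between distinct points of `A ⊆ ℝ²` lie in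
`{4n + 3 : n ∈ ℕ}`, then `A` has at most 3 elements. -/
theorem distance_set_four_int_plus_three (A : Set (EuclideanSpace ℝ (Fin 2)))
    (hA : ∀ a ∈ A, ∀ a' ∈ A, a ≠ a' → ∃ n : ℕ, dist a a' = 4 * (n : ℝ) + 3) :
    A.Finite ∧ A.ncard ≤ 3 := by
  classical
  have hfour : ∀ t : Set (EuclideanSpace ℝ (Fin 2)), t ⊆ A → t.Finite → t.ncard ≠ 4 := by
    intro t htA htfin hcard
    have hc : htfin.toFinset.card = 4 := by
      rw [← Set.ncard_eq_toFinset_card t htfin]; exact hcard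
    have e := htfin.toFinset.equivFinOfCardEq hc
    set a : Fin 4 → EuclideanSpace ℝ (Fin 2) :=
      fun i => (e.symm i : EuclideanSpace ℝ (Fin 2)) with ha
    have hinj : Function.Injective a := by
      intro i j hij
      apply e.symm.injective
      exact Subtype.ext hij
    apply key4 a hinj
    intro i j hij
    have hmem : ∀ k : Fin 4, a k ∈ A := by
      intro k
      exact htA (htfin.mem_toFinset.mp (e.symm k).2)
    exact hA _ (hmem i) _ (hmem j) (fun h => hij (hinj h))
  by_cases hfin : A.Finite
  · refine ⟨hfin, ?_⟩
    by_contra hlt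
    push_neg at hlt
    obtain ⟨t, hts, htcard⟩ := Set.exists_subset_card_eq (show 4 ≤ A.ncard by omega)
    exact hfour t hts (hfin.subset hts) htcard
  · exfalso
    obtain ⟨t, hts, htfin, htcard⟩ := Set.Infinite.exists_subset_ncard_eq hfin 4
    exact hfour t hts htfin htcard
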